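/- arXiv:2505.04304 — 3 statements merged into one kernel-verified Lean document; each statement's English description precedes it below -/
import Mathlib

section
/- For n ≥ 1, define s_j^- = I^{⊗(n-j)} ⊗ σ01 ⊗ σ10^{⊗(j-1)} and s_j^+ = (s_j^-)† for 1 ≤ j ≤ n. Then Σ_{j=1}^{n} Σ_{j'=j+1}^{n} ‖[(s_j^- + s_j^+), (s_{j'}^- + s_{j'}^+)]‖ = n − 1, where ‖·‖ is the operator norm and [·,·] the commutator. -/
open Matrix Complex
open scoped Matrix.Norms.L2Operator Kronecker

noncomputable section

/-- Kronecker product realized on `Fin (a*b)`, first factor most significant. -/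
def kron {a b : ℕ} (A : Matrix (Fin a) (Fin a) ℂ) (B : Matrix (Fin b) (Fin b) ℂ) :
    Matrix (Fin (a * b)) (Fin (a * b)) ℂ :=
  Matrix.reindex finProdFinEquiv finProdFinEquiv (Matrix.kroneckerMap (· * ·) A B)

def castM {a b : ℕ} (h : a = b) (A : Matrix (Fin a) (Fin a) ℂ) : Matrix (Fin b) (Fin b) ℂ :=
  Matrix.reindex (finCongr h) (finCongr h) A

def tpow (A : Matrix (Fin 2) (Fin 2) ℂ) : (k : ℕ) → Matrix (Fin (2 ^ k)) (Fin (2 ^ k)) ℂ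
  | 0 => 1
  | k + 1 => castM (pow_succ' 2 k).symm (kron A (tpow A k))

/-- `σ01 = |0⟩⟨1|`. -/
def sig01 : Matrix (Fin 2) (Fin 2) ℂ := Matrix.single 0 1 1

/-- `σ10 = |1⟩⟨0|`. -/
def sig10 : Matrix (Fin 2) (Fin 2) ℂ := Matrix.single 1 0 1

lemma sterm_size (n : ℕ) (j : Fin n) : 2 ^ (n - (j.1 + 1)) * (2 * 2 ^ j.1) = 2 ^ n := by
  rw [← pow_succ', ← pow_add]
  congr 1
  have hj := j.2
  omega

/-- `s_j^- = I^{⊗(n-j)} ⊗ σ01 ⊗ σ10^{⊗(j-1)}` on `n` qubits (paper index `j.1 + 1`). -/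
def sTerm (n : ℕ) (j : Fin n) : Matrix (Fin (2 ^ n)) (Fin (2 ^ n)) ℂ :=
  castM (sterm_size n j) (kron (tpow 1 (n - (j.1 + 1))) (kron sig01 (tpow sig10 j.1)))

lemma kron_apply {a b : ℕ} (A : Matrix (Fin a) (Fin a) ℂ) (B : Matrix (Fin b) (Fin b) ℂ)
    (x y : Fin (a*b)) : kron A B x y = A x.divNat y.divNat * B x.modNat y.modNat := rfl
lemma castM_apply {a b : ℕ} (h : a = b) (A : Matrix (Fin a) (Fin a) ℂ) (x y : Fin b) :
    castM h A x y = A (Fin.cast h.symm x) (Fin.cast h.symm y) := rfl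
lemma kron_one_one {a b : ℕ} : kron (1 : Matrix (Fin a) (Fin a) ℂ) (1 : Matrix (Fin b) (Fin b) ℂ) = 1 := by
  unfold kron
  rw [show (Matrix.kroneckerMap (· * ·) (1 : Matrix (Fin a) (Fin a) ℂ) (1 : Matrix (Fin b) (Fin b) ℂ)) = 1 from Matrix.one_kronecker_one]
  exact Matrix.submatrix_one_equiv _
lemma castM_one {a b : ℕ} (h : a = b) : castM h (1 : Matrix (Fin a) (Fin a) ℂ) = 1 :=
  Matrix.submatrix_one_equiv _
lemma tpow_one : ∀ k, tpow 1 k = 1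
  | 0 => rfl
  | k + 1 => by rw [tpow, tpow_one k, kron_one_one, castM_one]

lemma div_mod_eq_iff {K X d r : ℕ} (hK : 0 < K) (hr : r < K) :
    (X / K = d ∧ X % K = r) ↔ X = K * d + r := by
  constructor
  · rintro ⟨rfl, rfl⟩; exact (Nat.div_add_mod X K).symm
  · rintro rfl
    constructor
    · rw [Nat.mul_add_div hK, Nat.div_eq_of_lt hr, add_zero]
    · rw [Nat.mul_add_mod, Nat.mod_eq_of_lt hr]

lemma ite2_aux {P Q : Prop} [Decidable P] [Decidable Q] (a : ℂ) :
    (if P then (if Q then a else 0) else 0) = if Q ∧ P then a else 0 := by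
  by_cases hP : P <;> by_cases hQ : Q <;> simp [hP, hQ]

lemma ite3_aux {P Q R : Prop} [Decidable P] [Decidable Q] [Decidable R] (a : ℂ) :
    (if P then (if Q then (if R then a else 0) else 0) else 0) = if (R ∧ P) ∧ Q then a else 0 := by
  by_cases hP : P <;> by_cases hQ : Q <;> by_cases hR : R <;> simp [hP, hQ, hR]

lemma tpow_sig10_apply : ∀ k (x y : Fin (2^k)),
    tpow sig10 k x y = if x.1 = 2^k - 1 ∧ y.1 = 0 then 1 else 0
  | 0, x, y => by
    have hx : x.1 = 0 := by omega
    have hy : y.1 = 0 := by omega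
    have : x = y := by apply Fin.ext; omega
    rw [this, tpow, Matrix.one_apply_eq]
    simp [hy]
  | k + 1, x, y => by
    have hK : 0 < 2^k := Nat.pow_pos (n := k) (by norm_num)
    rw [tpow, castM_apply, kron_apply, tpow_sig10_apply k]
    simp only [sig10, Matrix.single_apply, Fin.ext_iff, Fin.coe_divNat,
      Fin.coe_modNat, Fin.coe_cast, Fin.val_one, Fin.val_zero, ite_mul, one_mul, zero_mul,
      mul_ite, mul_one, mul_zero]
    refine (ite2_aux _).trans ?_
    apply if_congr _ rfl rfl
    have hkk : 2^(k+1) = 2 * 2^k := by rw [pow_succ']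
    constructor
    · rintro ⟨⟨h3, h4⟩, h1, h2⟩
      have hx := (div_mod_eq_iff hK (show 2^k - 1 < 2^k by omega)).mp ⟨h1.symm, h3⟩
      have hy := (div_mod_eq_iff hK (show 0 < 2^k from hK)).mp ⟨h2.symm, h4⟩
      omega
    · rintro ⟨h1, h2⟩
      have hx := (div_mod_eq_iff hK (show 2^k - 1 < 2^k by omega)).mpr (show x.1 = 2^k * 1 + (2^k - 1) by omega)
      have hy := (div_mod_eq_iff hK (show 0 < 2^k from hK)).mpr (show y.1 = 2^k * 0 + 0 by omega)
      exact ⟨⟨hx.2, hy.2⟩, hx.1.symm, hy.1.symm⟩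

lemma mod_add_one' {X M r : ℕ} (h : X % M = r) (hr : r + 1 < M) :
    (X+1) % M = r + 1 ∧ (X+1)/M = X/M := by
  have h1 : M * (X/M) + X % M = X := Nat.div_add_mod X M
  have h2 : X + 1 = M * (X/M) + (r+1) := by omega
  have h3 := (div_mod_eq_iff (show 0 < M by omega) hr).mpr h2
  exact ⟨h3.2, h3.1⟩

lemma mod_sub_one' {X M r : ℕ} (hM : 0 < M) (h : X % M = r) (hr : 1 ≤ r) :
    (X-1) % M = r - 1 ∧ (X-1)/M = X/M := by
  have h1 : M * (X/M) + X % M = X := Nat.div_add_mod X M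
  have hrM : r < M := by rw [← h]; exact Nat.mod_lt _ hM
  have h2 : X - 1 = M * (X/M) + (r-1) := by omega
  have h3 := (div_mod_eq_iff hM (show r - 1 < M by omega)).mpr h2
  exact ⟨h3.2, h3.1⟩

lemma sTerm_apply (n : ℕ) (j : Fin n) (x y : Fin (2^n)) :
    sTerm n j x y = if x.1 % 2^(j.1+1) = 2^j.1 - 1 ∧ y.1 = x.1 + 1 then 1 else 0 := by
  have hK : 0 < 2^j.1 := Nat.pow_pos two_pos
  have hkk : (2:ℕ)^(j.1+1) = 2*2^j.1 := by rw [pow_succ']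
  rw [sTerm, castM_apply, kron_apply, kron_apply, tpow_one, tpow_sig10_apply]
  simp only [sig01, Matrix.single_apply, Matrix.one_apply, Fin.ext_iff,
    Fin.coe_divNat, Fin.coe_modNat, Fin.coe_cast, Fin.val_one, Fin.val_zero, ite_mul, one_mul,
    zero_mul, mul_ite, mul_one, mul_zero]
  refine (ite3_aux _).trans ?_
  apply if_congr _ rfl rfl
  set K := (2:ℕ)^j.1 with hKdef
  set b := 2*K with hbdef
  rw [hkk]
  constructor
  · rintro ⟨⟨⟨hxm, hym⟩, hxd, hyd⟩, h0⟩
    have hx2 := (div_mod_eq_iff hK (show K - 1 < K by omega)).mp ⟨hxd.symm, hxm⟩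
    have hy2 := (div_mod_eq_iff hK (show 0 < K from hK)).mp ⟨hyd.symm, hym⟩
    have hx3 : b * (x.1/b) + x.1 % b = x.1 := Nat.div_add_mod x.1 b
    have hy3 : b * (x.1/b) + y.1 % b = y.1 := by rw [h0]; exact Nat.div_add_mod y.1 b
    omega
  · rintro ⟨hxm, hy⟩
    have h1 := mod_add_one' hxm (show K - 1 + 1 < b by omega)
    have hx2 := (div_mod_eq_iff hK (show K - 1 < K by omega)).mpr (show x.1 % b = K * 0 + (K-1) by omega)
    have hy2 := (div_mod_eq_iff hK (show 0 < K from hK)).mpr (show (x.1+1) % b = K * 1 + 0 by omega)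
    rw [hy]
    exact ⟨⟨⟨hx2.2, hy2.2⟩, hx2.1.symm, hy2.1.symm⟩, h1.2.symm⟩

def Sm (n : ℕ) (j : Fin n) : Matrix (Fin (2^n)) (Fin (2^n)) ℂ := sTerm n j + (sTerm n j)ᴴ

lemma Sm_apply (n : ℕ) (j : Fin n) (x y : Fin (2^n)) :
    Sm n j x y = if (x.1 % 2^(j.1+1) = 2^j.1 - 1 ∧ y.1 = x.1+1) ∨
      (y.1 % 2^(j.1+1) = 2^j.1 - 1 ∧ x.1 = y.1+1) then 1 else 0 := by
  rw [Sm, Matrix.add_apply, Matrix.conjTranspose_apply, sTerm_apply, sTerm_apply]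
  have hst : star (if (y.1 % 2^(j.1+1) = 2^j.1 - 1 ∧ x.1 = y.1+1) then (1:ℂ) else 0)
      = if (y.1 % 2^(j.1+1) = 2^j.1 - 1 ∧ x.1 = y.1+1) then (1:ℂ) else 0 := by
    split_ifs <;> simp
  rw [hst]
  by_cases h1 : (x.1 % 2^(j.1+1) = 2^j.1 - 1 ∧ y.1 = x.1+1) <;>
    by_cases h2 : (y.1 % 2^(j.1+1) = 2^j.1 - 1 ∧ x.1 = y.1+1)
  · exfalso; omega
  · rw [if_pos h1, if_neg h2, if_pos (Or.inl h1), add_zero]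
  · rw [if_neg h1, if_pos h2, if_pos (Or.inr h2), zero_add]
  · rw [if_neg h1, if_neg h2, if_neg (by tauto), add_zero]

lemma Sm_symm (n : ℕ) (j : Fin n) (x y : Fin (2^n)) : Sm n j x y = Sm n j y x := by
  rw [Sm_apply, Sm_apply]
  exact if_congr or_comm rfl rfl

lemma Sm_herm (n : ℕ) (j : Fin n) : (Sm n j)ᴴ = Sm n j := by
  rw [Sm, Matrix.conjTranspose_add, Matrix.conjTranspose_conjTranspose, add_comm]

lemma succ_bound {n : ℕ} (j : Fin n) (x : Fin (2^n)) (hx : x.1 % 2^(j.1+1) = 2^j.1 - 1) :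
    x.1 + 1 < 2^n := by
  have hK : 0 < 2^j.1 := Nat.pow_pos two_pos
  have hkk : (2:ℕ)^(j.1+1) = 2*2^j.1 := by rw [pow_succ']
  have h1 := (mod_add_one' hx (by omega)).1
  have hdvd : (2:ℕ)^n % 2^(j.1+1) = 0 :=
    Nat.mod_eq_zero_of_dvd (pow_dvd_pow 2 j.2)
  by_contra hcon
  have hx2 : x.1 + 1 = 2^n := by have := x.2; omega
  rw [hx2] at h1
  omega

lemma Sm_row_succ {n : ℕ} (j : Fin n) (x : Fin (2^n)) (hx : x.1 % 2^(j.1+1) = 2^j.1 - 1) :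
    ∀ z : Fin (2^n), Sm n j x z = if z.1 = x.1 + 1 then 1 else 0 := by
  intro z
  have hK : 0 < 2^j.1 := Nat.pow_pos two_pos
  have hkk : (2:ℕ)^(j.1+1) = 2*2^j.1 := by rw [pow_succ']
  rw [Sm_apply]
  apply if_congr _ rfl rfl
  constructor
  · rintro (⟨h1, h2⟩ | ⟨h1, h2⟩)
    · exact h2
    · exfalso
      have h3 := (mod_add_one' h1 (by omega)).1
      rw [← h2] at h3
      omega
  · intro h'
    exact Or.inl ⟨hx, h'⟩

lemma Sm_row_pred {n : ℕ} (j : Fin n) (x : Fin (2^n)) (hx : x.1 % 2^(j.1+1) = 2^j.1) :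
    ∀ z : Fin (2^n), Sm n j x z = if z.1 = x.1 - 1 then 1 else 0 := by
  intro z
  have hK : 0 < 2^j.1 := Nat.pow_pos two_pos
  have hM : 0 < 2^(j.1+1) := Nat.pow_pos two_pos
  have hkk : (2:ℕ)^(j.1+1) = 2*2^j.1 := by rw [pow_succ']
  have hx1 : 2^j.1 ≤ x.1 := le_trans (le_of_eq hx.symm) (Nat.mod_le _ _)
  rw [Sm_apply]
  apply if_congr _ rfl rfl
  constructor
  · rintro (⟨h1, h2⟩ | ⟨h1, h2⟩)
    · omega
    · omega
  · intro h'
    right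
    have h3 := (mod_sub_one' hM hx (by omega)).1
    rw [h']
    exact ⟨h3, by omega⟩

lemma Sm_row_zero {n : ℕ} (j : Fin n) (x : Fin (2^n)) (hx1 : x.1 % 2^(j.1+1) ≠ 2^j.1 - 1)
    (hx2 : x.1 % 2^(j.1+1) ≠ 2^j.1) :
    ∀ z : Fin (2^n), Sm n j x z = 0 := by
  intro z
  have hK : 0 < 2^j.1 := Nat.pow_pos two_pos
  have hkk : (2:ℕ)^(j.1+1) = 2*2^j.1 := by rw [pow_succ']
  rw [Sm_apply, if_neg]
  rintro (⟨h1, h2⟩ | ⟨h1, h2⟩)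
  · exact hx1 h1
  · have h3 := (mod_add_one' h1 (by omega)).1
    rw [← h2] at h3
    omega

lemma mul_collapse {N : ℕ} (B A : Matrix (Fin N) (Fin N) ℂ) (x y t : Fin N)
    (hB : ∀ z, B x z = if z.1 = t.1 then 1 else 0) : (B * A) x y = A t y := by
  rw [Matrix.mul_apply]
  have h1 : ∀ z : Fin N, B x z * A z y = if z = t then A z y else 0 := by
    intro z
    rw [hB z]
    by_cases h : z = t
    · rw [if_pos h, if_pos (by rw [h]), one_mul]
    · rw [if_neg h, if_neg (fun hv => h (Fin.ext hv)), zero_mul]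
  rw [Finset.sum_congr rfl (fun z _ => h1 z), Finset.sum_ite_eq' Finset.univ t (fun z => A z y),
    if_pos (Finset.mem_univ t)]

lemma collapse_zero {N : ℕ} (B A : Matrix (Fin N) (Fin N) ℂ) (x y : Fin N)
    (hB : ∀ z, B x z = 0) : (B * A) x y = 0 := by
  rw [Matrix.mul_apply]
  exact Finset.sum_eq_zero (fun z _ => by rw [hB z, zero_mul])

section identities
variable {n : ℕ}

lemma S1_sq (j : Fin n) (hj : j.1 = 0) : Sm n j * Sm n j = 1 := by
  have e1 : (2:ℕ)^(j.1+1) = 2 := by rw [hj]; norm_num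
  have e2 : (2:ℕ)^j.1 = 1 := by rw [hj, pow_zero]
  ext x y
  by_cases hp : x.1 % 2 = 0
  · have hx : x.1 % 2^(j.1+1) = 2^j.1 - 1 := by rw [e1, e2]; omega
    rw [mul_collapse _ _ x y ⟨x.1+1, succ_bound j x hx⟩ (Sm_row_succ j x hx)]
    have ht : (⟨x.1+1, succ_bound j x hx⟩ : Fin (2^n)).1 % 2^(j.1+1) = 2^j.1 := by
      rw [Fin.val_mk, e1, e2]; omega
    rw [Sm_row_pred j _ ht y, Matrix.one_apply]
    apply if_congr _ rfl rfl
    simp only [Fin.ext_iff, Fin.val_mk]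
    constructor <;> intro h <;> omega
  · have hx : x.1 % 2^(j.1+1) = 2^j.1 := by rw [e1, e2]; omega
    rw [mul_collapse _ _ x y ⟨x.1-1, by have := x.2; omega⟩ (Sm_row_pred j x hx)]
    have ht : (⟨x.1-1, by have := x.2; omega⟩ : Fin (2^n)).1 % 2^(j.1+1) = 2^j.1 - 1 := by
      rw [Fin.val_mk, e1, e2]; omega
    rw [Sm_row_succ j _ ht y, Matrix.one_apply]
    apply if_congr _ rfl rfl
    simp only [Fin.ext_iff, Fin.val_mk]
    constructor <;> intro h <;> omega

lemma Sq_cube (j : Fin n) : Sm n j * (Sm n j * Sm n j) = Sm n j := by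
  have hK : 0 < 2^j.1 := Nat.pow_pos two_pos
  have hM : 0 < 2^(j.1+1) := Nat.pow_pos two_pos
  have hkk : (2:ℕ)^(j.1+1) = 2*2^j.1 := by rw [pow_succ']
  ext x y
  by_cases h1 : x.1 % 2^(j.1+1) = 2^j.1 - 1
  · rw [mul_collapse _ _ x y ⟨x.1+1, succ_bound j x h1⟩ (Sm_row_succ j x h1)]
    have h2 : (⟨x.1+1, succ_bound j x h1⟩ : Fin (2^n)).1 % 2^(j.1+1) = 2^j.1 := by
      rw [Fin.val_mk]; have := (mod_add_one' h1 (by omega)).1; omega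
    rw [mul_collapse _ _ _ y ⟨x.1+1-1, by have := x.2; omega⟩
      (Sm_row_pred j ⟨x.1+1, succ_bound j x h1⟩ h2)]
    congr 1
  · by_cases h2 : x.1 % 2^(j.1+1) = 2^j.1
    · have hx1 : 1 ≤ x.1 := by have := Nat.mod_le x.1 (2^(j.1+1)); omega
      rw [mul_collapse _ _ x y ⟨x.1-1, by have := x.2; omega⟩ (Sm_row_pred j x h2)]
      have h3 : (⟨x.1-1, by have := x.2; omega⟩ : Fin (2^n)).1 % 2^(j.1+1) = 2^j.1 - 1 := by
        rw [Fin.val_mk]; exact (mod_sub_one' hM h2 (by omega)).1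
      rw [mul_collapse _ _ _ y ⟨x.1-1+1, by have := x.2; omega⟩
        (Sm_row_succ j ⟨x.1-1, by have := x.2; omega⟩ h3)]
      congr 1
      exact Fin.ext (by rw [Fin.val_mk]; omega)
    · rw [collapse_zero _ _ x y (Sm_row_zero j x h1 h2), Sm_row_zero j x h1 h2 y]
end identities

section identities2
variable {n : ℕ}

lemma ab_ab (j0 j' : Fin n) (hj0 : j0.1 = 0) (hj' : 1 ≤ j'.1) :
    Sm n j0 * (Sm n j' * (Sm n j0 * Sm n j')) = 0 := by
  have e1 : (2:ℕ)^(j0.1+1) = 2 := by rw [hj0]; norm_num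
  have e2 : (2:ℕ)^j0.1 = 1 := by rw [hj0, pow_zero]
  have hH : 2 ≤ 2^j'.1 := by
    calc (2:ℕ) = 2^1 := by norm_num
    _ ≤ 2^j'.1 := Nat.pow_le_pow_right (by norm_num) hj'
  have hMH : (2:ℕ)^(j'.1+1) = 2*2^j'.1 := by rw [pow_succ']
  have hM : 0 < (2:ℕ)^(j'.1+1) := Nat.pow_pos two_pos
  have hHeven : (2:ℕ)^j'.1 % 2 = 0 := by
    have h : (2:ℕ)^j'.1 = 2 * 2^(j'.1-1) := by
      conv_lhs => rw [show j'.1 = (j'.1-1)+1 by omega]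
      rw [pow_succ']
    omega
  have hpar : ∀ X : ℕ, X % 2 = X % (2^(j'.1+1)) % 2 :=
    fun X => (Nat.mod_mod_of_dvd X ⟨2^j'.1, hMH⟩).symm
  ext x y
  rw [Matrix.zero_apply]
  by_cases hp : x.1 % 2 = 0
  · have hx : x.1 % 2^(j0.1+1) = 2^j0.1 - 1 := by rw [e1, e2]; omega
    have b1 : x.1+1 < 2^n := succ_bound j0 x hx
    rw [mul_collapse _ _ x y ⟨x.1+1, b1⟩ (Sm_row_succ j0 x hx)]
    by_cases hr1 : (x.1+1) % 2^(j'.1+1) = 2^j'.1 - 1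
    · have b2 : x.1+1+1 < 2^n := succ_bound j' ⟨x.1+1, b1⟩ hr1
      rw [mul_collapse _ _ _ y ⟨x.1+1+1, b2⟩ (Sm_row_succ j' ⟨x.1+1, b1⟩ hr1)]
      have hr2 : (x.1+1+1) % 2^(j'.1+1) = 2^j'.1 := by
        have := (mod_add_one' hr1 (by omega)).1; omega
      have hp2 : (x.1+1+1) % 2 = 0 := by rw [hpar (x.1+1+1), hr2]; exact hHeven
      have hx2 : (x.1+1+1) % 2^(j0.1+1) = 2^j0.1 - 1 := by rw [e1, e2]; omega
      have b3 : x.1+1+1+1 < 2^n := succ_bound j0 ⟨x.1+1+1, b2⟩ hx2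
      rw [mul_collapse _ _ _ y ⟨x.1+1+1+1, b3⟩ (Sm_row_succ j0 ⟨x.1+1+1, b2⟩ hx2)]
      have hr3 : (x.1+1+1+1) % 2^(j'.1+1) = 2^j'.1 + 1 := (mod_add_one' hr2 (by omega)).1
      exact Sm_row_zero j' _ (show ¬((x.1+1+1+1) % 2^(j'.1+1) = 2^j'.1 - 1) by omega)
        (show ¬((x.1+1+1+1) % 2^(j'.1+1) = 2^j'.1) by omega) y
    · by_cases hr2c : (x.1+1) % 2^(j'.1+1) = 2^j'.1
      · exfalso
        have h5 := hpar (x.1+1)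
        rw [hr2c] at h5
        omega
      · exact collapse_zero _ _ _ y (Sm_row_zero j' _ hr1 hr2c)
  · have hx : x.1 % 2^(j0.1+1) = 2^j0.1 := by rw [e1, e2]; omega
    rw [mul_collapse _ _ x y ⟨x.1-1, by have := x.2; omega⟩ (Sm_row_pred j0 x hx)]
    by_cases hr1 : (x.1-1) % 2^(j'.1+1) = 2^j'.1 - 1
    · exfalso
      have h5 := hpar (x.1-1)
      rw [hr1] at h5
      omega
    · by_cases hr2 : (x.1-1) % 2^(j'.1+1) = 2^j'.1
      · have hx1 : 2 ≤ x.1 - 1 := by have := Nat.mod_le (x.1-1) (2^(j'.1+1)); omega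
        rw [mul_collapse _ _ _ y ⟨x.1-1-1, by have := x.2; omega⟩
          (Sm_row_pred j' ⟨x.1-1, by have := x.2; omega⟩ hr2)]
        have hr3 : (x.1-1-1) % 2^(j'.1+1) = 2^j'.1 - 1 := (mod_sub_one' hM hr2 (by omega)).1
        have hp2 : (x.1-1-1) % 2 = 1 := by
          have h5 := hpar (x.1-1-1)
          rw [hr3] at h5
          omega
        have hx2 : (x.1-1-1) % 2^(j0.1+1) = 2^j0.1 := by rw [e1, e2]; omega
        rw [mul_collapse _ _ _ y ⟨x.1-1-1-1, by have := x.2; omega⟩ (Sm_row_pred j0 _ hx2)]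
        have hr4 : (x.1-1-1-1) % 2^(j'.1+1) = 2^j'.1 - 2 := by
          have := (mod_sub_one' hM hr3 (by omega)).1; omega
        exact Sm_row_zero j' _ (show ¬((x.1-1-1-1) % 2^(j'.1+1) = 2^j'.1 - 1) by omega)
          (show ¬((x.1-1-1-1) % 2^(j'.1+1) = 2^j'.1) by omega) y
      · exact collapse_zero _ _ _ y (Sm_row_zero j' _ hr1 hr2)
end identities2

section identities3
variable {n : ℕ}

lemma succ_bound' {n : ℕ} (j' : Fin n) (x : ℕ) (hx : x < 2^n)
    (h : (x+1) % 2^(j'.1+1) ≠ 0) : x + 1 < 2^n := by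
  have hdvd : (2:ℕ)^n % 2^(j'.1+1) = 0 := Nat.mod_eq_zero_of_dvd (pow_dvd_pow 2 j'.2)
  by_contra hc
  have h2 : x + 1 = 2^n := by omega
  rw [h2] at h
  omega

lemma ba_ba (j0 j' : Fin n) (hj0 : j0.1 = 0) (hj' : 1 ≤ j'.1) :
    Sm n j' * (Sm n j0 * (Sm n j' * Sm n j0)) = 0 := by
  have e1 : (2:ℕ)^(j0.1+1) = 2 := by rw [hj0]; norm_num
  have e2 : (2:ℕ)^j0.1 = 1 := by rw [hj0, pow_zero]
  have hH : 2 ≤ 2^j'.1 := by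
    calc (2:ℕ) = 2^1 := by norm_num
    _ ≤ 2^j'.1 := Nat.pow_le_pow_right (by norm_num) hj'
  have hMH : (2:ℕ)^(j'.1+1) = 2*2^j'.1 := by rw [pow_succ']
  have hM : 0 < (2:ℕ)^(j'.1+1) := Nat.pow_pos two_pos
  have hHeven : (2:ℕ)^j'.1 % 2 = 0 := by
    have h : (2:ℕ)^j'.1 = 2 * 2^(j'.1-1) := by
      conv_lhs => rw [show j'.1 = (j'.1-1)+1 by omega]
      rw [pow_succ']
    omega
  have hpar : ∀ X : ℕ, X % 2 = X % (2^(j'.1+1)) % 2 :=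
    fun X => (Nat.mod_mod_of_dvd X ⟨2^j'.1, hMH⟩).symm
  ext x y
  rw [Matrix.zero_apply]
  by_cases hr1 : x.1 % 2^(j'.1+1) = 2^j'.1 - 1
  · have b1 : x.1+1 < 2^n := succ_bound j' x hr1
    rw [mul_collapse _ _ x y ⟨x.1+1, b1⟩ (Sm_row_succ j' x hr1)]
    have hr2 : (x.1+1) % 2^(j'.1+1) = 2^j'.1 := by
      have := (mod_add_one' hr1 (by omega)).1; omega
    have hp1 : (x.1+1) % 2 = 0 := by rw [hpar (x.1+1), hr2]; exact hHeven
    have hx1 : (x.1+1) % 2^(j0.1+1) = 2^j0.1 - 1 := by rw [e1, e2]; omega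
    have hr3 : (x.1+1+1) % 2^(j'.1+1) = 2^j'.1 + 1 := (mod_add_one' hr2 (by omega)).1
    have b2 : x.1+1+1 < 2^n := succ_bound' j' (x.1+1) b1 (by omega)
    rw [mul_collapse _ _ _ y ⟨x.1+1+1, b2⟩ (Sm_row_succ j0 ⟨x.1+1, b1⟩ hx1)]
    exact collapse_zero _ _ ⟨x.1+1+1, b2⟩ y (Sm_row_zero j' ⟨x.1+1+1, b2⟩ (show ¬((x.1+1+1) % 2^(j'.1+1) = 2^j'.1 - 1) by omega)
      (show ¬((x.1+1+1) % 2^(j'.1+1) = 2^j'.1) by omega))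
  · by_cases hr2 : x.1 % 2^(j'.1+1) = 2^j'.1
    · have hx2 : 2 ≤ x.1 := by have := Nat.mod_le x.1 (2^(j'.1+1)); omega
      have b1 : x.1-1 < 2^n := by have := x.2; omega
      rw [mul_collapse _ _ x y ⟨x.1-1, b1⟩ (Sm_row_pred j' x hr2)]
      have hr3 : (x.1-1) % 2^(j'.1+1) = 2^j'.1 - 1 := (mod_sub_one' hM hr2 (by omega)).1
      have hp1 : (x.1-1) % 2 = 1 := by
        have h5 := hpar (x.1-1); rw [hr3] at h5; omega
      have hx1 : (x.1-1) % 2^(j0.1+1) = 2^j0.1 := by rw [e1, e2]; omega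
      have b2 : x.1-1-1 < 2^n := by have := x.2; omega
      rw [mul_collapse _ _ _ y ⟨x.1-1-1, b2⟩ (Sm_row_pred j0 ⟨x.1-1, b1⟩ hx1)]
      have hr4 : (x.1-1-1) % 2^(j'.1+1) = 2^j'.1 - 2 := by
        have := (mod_sub_one' hM hr3 (by omega)).1; omega
      exact collapse_zero _ _ ⟨x.1-1-1, b2⟩ y (Sm_row_zero j' ⟨x.1-1-1, b2⟩ (show ¬((x.1-1-1) % 2^(j'.1+1) = 2^j'.1 - 1) by omega)
        (show ¬((x.1-1-1) % 2^(j'.1+1) = 2^j'.1) by omega))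
    · exact collapse_zero _ _ _ y (Sm_row_zero j' _ hr1 hr2)

lemma bb_a_bb (j0 j' : Fin n) (hj0 : j0.1 = 0) (hj' : 1 ≤ j'.1) :
    Sm n j' * (Sm n j' * (Sm n j0 * (Sm n j' * Sm n j'))) = 0 := by
  have e1 : (2:ℕ)^(j0.1+1) = 2 := by rw [hj0]; norm_num
  have e2 : (2:ℕ)^j0.1 = 1 := by rw [hj0, pow_zero]
  have hH : 2 ≤ 2^j'.1 := by
    calc (2:ℕ) = 2^1 := by norm_num
    _ ≤ 2^j'.1 := Nat.pow_le_pow_right (by norm_num) hj'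
  have hMH : (2:ℕ)^(j'.1+1) = 2*2^j'.1 := by rw [pow_succ']
  have hM : 0 < (2:ℕ)^(j'.1+1) := Nat.pow_pos two_pos
  have hHeven : (2:ℕ)^j'.1 % 2 = 0 := by
    have h : (2:ℕ)^j'.1 = 2 * 2^(j'.1-1) := by
      conv_lhs => rw [show j'.1 = (j'.1-1)+1 by omega]
      rw [pow_succ']
    omega
  have hpar : ∀ X : ℕ, X % 2 = X % (2^(j'.1+1)) % 2 :=
    fun X => (Nat.mod_mod_of_dvd X ⟨2^j'.1, hMH⟩).symm
  ext x y
  rw [Matrix.zero_apply]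
  by_cases hr1 : x.1 % 2^(j'.1+1) = 2^j'.1 - 1
  · have b1 : x.1+1 < 2^n := succ_bound j' x hr1
    rw [mul_collapse _ _ x y ⟨x.1+1, b1⟩ (Sm_row_succ j' x hr1)]
    have hr2 : (x.1+1) % 2^(j'.1+1) = 2^j'.1 := by
      have := (mod_add_one' hr1 (by omega)).1; omega
    have b2 : x.1+1-1 < 2^n := by have := x.2; omega
    rw [mul_collapse _ _ _ y ⟨x.1+1-1, b2⟩ (Sm_row_pred j' ⟨x.1+1, b1⟩ hr2)]
    have hr3 : (x.1+1-1) % 2^(j'.1+1) = 2^j'.1 - 1 := (mod_sub_one' hM hr2 (by omega)).1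
    have hp1 : (x.1+1-1) % 2 = 1 := by
      have h5 := hpar (x.1+1-1); rw [hr3] at h5; omega
    have hx1 : (x.1+1-1) % 2^(j0.1+1) = 2^j0.1 := by rw [e1, e2]; omega
    have hx2 : 1 ≤ x.1+1-1 := by have := Nat.mod_le (x.1+1-1) (2^(j'.1+1)); omega
    have b3 : x.1+1-1-1 < 2^n := by have := x.2; omega
    rw [mul_collapse _ _ _ y ⟨x.1+1-1-1, b3⟩ (Sm_row_pred j0 ⟨x.1+1-1, b2⟩ hx1)]
    have hr4 : (x.1+1-1-1) % 2^(j'.1+1) = 2^j'.1 - 2 := by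
      have := (mod_sub_one' hM hr3 (by omega)).1; omega
    exact collapse_zero _ _ ⟨x.1+1-1-1, b3⟩ y (Sm_row_zero j' ⟨x.1+1-1-1, b3⟩ (show ¬((x.1+1-1-1) % 2^(j'.1+1) = 2^j'.1 - 1) by omega)
      (show ¬((x.1+1-1-1) % 2^(j'.1+1) = 2^j'.1) by omega))
  · by_cases hr2 : x.1 % 2^(j'.1+1) = 2^j'.1
    · have hx2 : 2 ≤ x.1 := by have := Nat.mod_le x.1 (2^(j'.1+1)); omega
      have b1 : x.1-1 < 2^n := by have := x.2; omega
      rw [mul_collapse _ _ x y ⟨x.1-1, b1⟩ (Sm_row_pred j' x hr2)]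
      have hr3 : (x.1-1) % 2^(j'.1+1) = 2^j'.1 - 1 := (mod_sub_one' hM hr2 (by omega)).1
      have b2 : x.1-1+1 < 2^n := by have := x.2; omega
      rw [mul_collapse _ _ _ y ⟨x.1-1+1, b2⟩ (Sm_row_succ j' ⟨x.1-1, b1⟩ hr3)]
      have hr4 : (x.1-1+1) % 2^(j'.1+1) = 2^j'.1 := by
        have := (mod_add_one' hr3 (by omega)).1; omega
      have hp1 : (x.1-1+1) % 2 = 0 := by rw [hpar (x.1-1+1), hr4]; exact hHeven
      have hx1 : (x.1-1+1) % 2^(j0.1+1) = 2^j0.1 - 1 := by rw [e1, e2]; omega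
      have hr5 : (x.1-1+1+1) % 2^(j'.1+1) = 2^j'.1 + 1 := (mod_add_one' hr4 (by omega)).1
      have b3 : x.1-1+1+1 < 2^n := succ_bound' j' (x.1-1+1) b2 (by omega)
      rw [mul_collapse _ _ _ y ⟨x.1-1+1+1, b3⟩ (Sm_row_succ j0 ⟨x.1-1+1, b2⟩ hx1)]
      exact collapse_zero _ _ ⟨x.1-1+1+1, b3⟩ y (Sm_row_zero j' ⟨x.1-1+1+1, b3⟩ (show ¬((x.1-1+1+1) % 2^(j'.1+1) = 2^j'.1 - 1) by omega)
        (show ¬((x.1-1+1+1) % 2^(j'.1+1) = 2^j'.1) by omega))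
    · exact collapse_zero _ _ _ y (Sm_row_zero j' _ hr1 hr2)
end identities3

section final
variable {n : ℕ}

lemma Sm_ne_row (j : Fin n) (x z : Fin (2^n)) (h : Sm n j x z ≠ 0) :
    x.1 % 2^(j.1+1) = 2^j.1 - 1 ∨ x.1 % 2^(j.1+1) = 2^j.1 := by
  have hK : 0 < 2^j.1 := Nat.pow_pos two_pos
  have hkk : (2:ℕ)^(j.1+1) = 2*2^j.1 := by rw [pow_succ']
  rw [Sm_apply] at h
  by_cases hc : (x.1 % 2^(j.1+1) = 2^j.1 - 1 ∧ z.1 = x.1+1) ∨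
      (z.1 % 2^(j.1+1) = 2^j.1 - 1 ∧ x.1 = z.1+1)
  · rcases hc with ⟨h1, _⟩ | ⟨h1, h2⟩
    · exact Or.inl h1
    · right
      have h3 := (mod_add_one' h1 (by omega)).1
      rw [← h2] at h3
      omega
  · rw [if_neg hc] at h
    exact absurd rfl h

lemma Sm_ne_col (j : Fin n) (x z : Fin (2^n)) (h : Sm n j x z ≠ 0) :
    z.1 % 2^(j.1+1) = 2^j.1 - 1 ∨ z.1 % 2^(j.1+1) = 2^j.1 :=
  Sm_ne_row j z x (by rwa [Sm_symm] at h)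

lemma pred_pow_mod (a b : ℕ) (hba : b ≤ a) : (2^a - 1) % 2^b = 2^b - 1 := by
  have hb : 0 < (2:ℕ)^b := Nat.pow_pos two_pos
  have e : (2:ℕ)^a = 2^b * 2^(a-b) := by rw [← pow_add]; congr 1; omega
  obtain ⟨E', hE'⟩ : ∃ E', (2:ℕ)^(a-b) = 1 + E' :=
    ⟨2^(a-b) - 1, by have := Nat.pow_pos (n := a-b) two_pos; omega⟩
  have e2 : (2:ℕ)^a = 2^b + 2^b * E' := by rw [e, hE', Nat.mul_add, Nat.mul_one]
  have e3 : (2:ℕ)^a - 1 = 2^b * E' + (2^b - 1) := by omega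
  rw [e3, Nat.mul_add_mod, Nat.mod_eq_of_lt (by omega)]

lemma resid_contra (j j' : Fin n) (h1 : 1 ≤ j.1) (h2 : j.1 < j'.1) (z : Fin (2^n))
    (ha : z.1 % 2^(j.1+1) = 2^j.1 - 1 ∨ z.1 % 2^(j.1+1) = 2^j.1)
    (hb : z.1 % 2^(j'.1+1) = 2^j'.1 - 1 ∨ z.1 % 2^(j'.1+1) = 2^j'.1) : False := by
  have hK : 2 ≤ (2:ℕ)^j.1 := by
    calc (2:ℕ) = 2^1 := by norm_num
    _ ≤ 2^j.1 := Nat.pow_le_pow_right (by norm_num) h1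
  have hkk : (2:ℕ)^(j.1+1) = 2*2^j.1 := by rw [pow_succ']
  have hmm : z.1 % 2^(j.1+1) = z.1 % 2^(j'.1+1) % 2^(j.1+1) :=
    (Nat.mod_mod_of_dvd z.1 (pow_dvd_pow 2 (by omega))).symm
  rcases hb with hb | hb
  · rw [hb] at hmm
    have h3 : ((2:ℕ)^j'.1 - 1) % 2^(j.1+1) = 2^(j.1+1) - 1 := pred_pow_mod j'.1 (j.1+1) (by omega)
    rw [h3] at hmm
    omega
  · rw [hb] at hmm
    have e : (2:ℕ)^j'.1 = 2^(j.1+1) * 2^(j'.1-(j.1+1)) := by rw [← pow_add]; congr 1; omega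
    rw [e, Nat.mul_mod_right] at hmm
    omega

lemma Sm_mul_Sm_zero (j j' : Fin n) (h1 : 1 ≤ j.1) (h2 : j.1 < j'.1) :
    Sm n j * Sm n j' = 0 ∧ Sm n j' * Sm n j = 0 := by
  constructor <;> ext x y <;> rw [Matrix.mul_apply, Matrix.zero_apply] <;>
    refine Finset.sum_eq_zero (fun z _ => ?_) <;> by_contra h
  · have ha : Sm n j x z ≠ 0 := fun e => h (by rw [e, zero_mul])
    have hb : Sm n j' z y ≠ 0 := fun e => h (by rw [e, mul_zero])
    exact resid_contra j j' h1 h2 z (Sm_ne_col j x z ha) (Sm_ne_row j' z y hb)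
  · have ha : Sm n j' x z ≠ 0 := fun e => h (by rw [e, zero_mul])
    have hb : Sm n j z y ≠ 0 := fun e => h (by rw [e, mul_zero])
    exact resid_contra j j' h1 h2 z (Sm_ne_row j z y hb) (Sm_ne_col j' x z ha)

lemma comm_alg {N : ℕ} (a b : Matrix (Fin N) (Fin N) ℂ)
    (i1 : a*a = 1) (i2 : b*(b*b) = b) (i3 : a*(b*(a*b)) = 0) (i3' : b*(a*(b*a)) = 0)
    (i4 : b*(b*(a*(b*b))) = 0) :
    (a*b - b*a)*(a*b - b*a)*((a*b - b*a)*(a*b - b*a)) + (a*b - b*a)*(a*b - b*a) = 0 := by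
  have i1s : ∀ x : Matrix (Fin N) (Fin N) ℂ, a*(a*x) = x := fun x => by
    rw [← mul_assoc, i1, one_mul]
  have i2s : ∀ x : Matrix (Fin N) (Fin N) ℂ, b*(b*(b*x)) = b*x := fun x => by
    rw [show b*(b*(b*x)) = (b*(b*b))*x by simp only [mul_assoc], i2]
  have i4s : ∀ x : Matrix (Fin N) (Fin N) ℂ, b*(b*(a*(b*(b*x)))) = 0 := fun x => by
    rw [show b*(b*(a*(b*(b*x)))) = (b*(b*(a*(b*b))))*x by simp only [mul_assoc], i4, zero_mul]
  have hCC : (a*b - b*a)*(a*b - b*a) = -(a*(b*(b*a)) + b*b) := by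
    rw [sub_mul, mul_sub, mul_sub]
    simp only [mul_assoc]
    rw [i3, i3', i1s b]
    abel
  have hDD : (a*(b*(b*a)) + b*b)*(a*(b*(b*a)) + b*b) = a*(b*(b*a)) + b*b := by
    rw [add_mul, mul_add, mul_add]
    simp only [mul_assoc]
    rw [i1s (b*(b*a)), i2s (b*a), i2s b, i4s a,
      show b*(b*(a*(b*b))) = 0 from i4, mul_zero]
    abel
  rw [hCC, neg_mul_neg, hDD]
  exact add_neg_cancel _
end final
lemma norm_eq_one_of {m : ℕ} (C : Matrix (Fin m) (Fin m) ℂ)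
    (hC : Cᴴ = -C) (h4 : C*C*(C*C) + C*C = 0) (h0 : C ≠ 0) : ‖C‖ = 1 := by
  set Q := Cᴴ * C with hQ
  have hQC : Q = -(C*C) := by rw [hQ, hC]; exact neg_mul C C
  have hQQ : Q * Q = Q := by
    rw [hQC, neg_mul_neg, eq_neg_of_add_eq_zero_left h4]
  have hQH : Qᴴ = Q := by rw [hQ, Matrix.conjTranspose_mul, Matrix.conjTranspose_conjTranspose]
  have h1 : ‖Q‖ = ‖C‖ * ‖C‖ := Matrix.l2_opNorm_conjTranspose_mul_self C
  have h2 : ‖Q‖ * ‖Q‖ = ‖Q‖ := by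
    conv_lhs => rw [← Matrix.l2_opNorm_conjTranspose_mul_self Q]
    rw [hQH, hQQ]
  have h3 : ‖C‖ ≠ 0 := norm_ne_zero_iff.mpr h0
  have h5 := norm_nonneg C
  have h6 : (‖C‖ * ‖C‖) * ((‖C‖ * ‖C‖) - 1) = 0 := by rw [h1] at h2; linear_combination h2
  rcases mul_eq_zero.mp h6 with h | h
  · exact absurd (mul_self_eq_zero.mp h) h3
  · rcases mul_self_eq_one_iff.mp (show ‖C‖ * ‖C‖ = 1 by linarith) with h' | h'
    · exact h'
    · linarith

section final2
variable {n : ℕ}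

lemma comm_herm (j j' : Fin n) :
    (Sm n j * Sm n j' - Sm n j' * Sm n j)ᴴ = -(Sm n j * Sm n j' - Sm n j' * Sm n j) := by
  rw [Matrix.conjTranspose_sub, Matrix.conjTranspose_mul, Matrix.conjTranspose_mul,
    Sm_herm, Sm_herm]
  exact (neg_sub _ _).symm

lemma comm_ne_zero (j j' : Fin n) (hj : j.1 = 0) (hj' : 1 ≤ j'.1) :
    Sm n j * Sm n j' - Sm n j' * Sm n j ≠ 0 := by
  have e1 : (2:ℕ)^(j.1+1) = 2 := by rw [hj]; norm_num
  have e2 : (2:ℕ)^j.1 = 1 := by rw [hj, pow_zero]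
  have hH : 2 ≤ 2^j'.1 := by
    calc (2:ℕ) = 2^1 := by norm_num
    _ ≤ 2^j'.1 := Nat.pow_le_pow_right (by norm_num) hj'
  have hMH : (2:ℕ)^(j'.1+1) = 2*2^j'.1 := by rw [pow_succ']
  have hHeven : (2:ℕ)^j'.1 % 2 = 0 := by
    have h : (2:ℕ)^j'.1 = 2 * 2^(j'.1-1) := by
      conv_lhs => rw [show j'.1 = (j'.1-1)+1 by omega]
      rw [pow_succ']
    omega
  have hHlt : (2:ℕ)^j'.1 < 2^n := Nat.pow_lt_pow_right one_lt_two j'.2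
  set x0 : Fin (2^n) := ⟨2^j'.1 - 2, by omega⟩ with hx0
  set y0 : Fin (2^n) := ⟨2^j'.1, hHlt⟩ with hy0
  intro hzero
  have hx : x0.1 % 2^(j.1+1) = 2^j.1 - 1 := by rw [e1, e2]; show (2^j'.1-2) % 2 = 0; omega
  have hval1 : (Sm n j * Sm n j') x0 y0 = 1 := by
    rw [mul_collapse _ _ x0 y0 ⟨x0.1+1, succ_bound j x0 hx⟩ (Sm_row_succ j x0 hx)]
    rw [Sm_apply, if_pos]
    left
    constructor
    · show (2^j'.1-2+1) % 2^(j'.1+1) = 2^j'.1 - 1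
      rw [Nat.mod_eq_of_lt (by omega)]
      omega
    · show (2:ℕ)^j'.1 = (2^j'.1-2+1) + 1
      omega
  have hval2 : (Sm n j' * Sm n j) x0 y0 = 0 := by
    refine collapse_zero _ _ x0 y0 (Sm_row_zero j' x0 ?_ ?_)
    · show ¬((2^j'.1-2) % 2^(j'.1+1) = 2^j'.1 - 1)
      rw [Nat.mod_eq_of_lt (by omega)]
      omega
    · show ¬((2^j'.1-2) % 2^(j'.1+1) = 2^j'.1)
      rw [Nat.mod_eq_of_lt (by omega)]
      omega
  have hfin : (Sm n j * Sm n j' - Sm n j' * Sm n j) x0 y0 = 1 := by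
    rw [Matrix.sub_apply, hval1, hval2, sub_zero]
  rw [hzero, Matrix.zero_apply] at hfin
  exact one_ne_zero hfin.symm

lemma term_eval (j j' : Fin n) :
    (if j < j' then ‖Sm n j * Sm n j' - Sm n j' * Sm n j‖ else 0)
      = if j.1 = 0 ∧ 0 < j'.1 then (1:ℝ) else 0 := by
  by_cases hlt : j < j'
  · have hlt' : j.1 < j'.1 := hlt
    rw [if_pos hlt]
    by_cases hj : j.1 = 0
    · rw [if_pos ⟨hj, by omega⟩]
      have hj' : 1 ≤ j'.1 := by omega
      exact norm_eq_one_of _ (comm_herm j j')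
        (comm_alg (Sm n j) (Sm n j') (S1_sq j hj) (Sq_cube j') (ab_ab j j' hj hj')
          (ba_ba j j' hj hj') (bb_a_bb j j' hj hj'))
        (comm_ne_zero j j' hj hj')
    · rw [if_neg (fun hc => hj hc.1)]
      have h0 := Sm_mul_Sm_zero j j' (by omega) hlt'
      rw [h0.1, h0.2, sub_zero, norm_zero]
  · rw [if_neg hlt, if_neg]
    rintro ⟨h1, h2⟩
    have hle : j'.1 ≤ j.1 := Fin.not_lt.mp hlt
    omega
end final2


/-- Sum of spectral norms of commutators of the shift summands equals `n - 1`. -/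
theorem stmt_3 (n : ℕ) (hn : 1 ≤ n) :
    ∑ j : Fin n, ∑ j' : Fin n,
      (if j < j' then
        ‖(sTerm n j + (sTerm n j)ᴴ) * (sTerm n j' + (sTerm n j')ᴴ) -
          (sTerm n j' + (sTerm n j')ᴴ) * (sTerm n j + (sTerm n j)ᴴ)‖
      else 0) = (n : ℝ) - 1 := by
  have key : ∀ j j' : Fin n, (if j < j' then
        ‖(sTerm n j + (sTerm n j)ᴴ) * (sTerm n j' + (sTerm n j')ᴴ) -
          (sTerm n j' + (sTerm n j')ᴴ) * (sTerm n j + (sTerm n j)ᴴ)‖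
      else 0) = if j.1 = 0 ∧ 0 < j'.1 then (1:ℝ) else 0 := fun j j' => term_eval j j'
  rw [Finset.sum_congr rfl (fun j _ => Finset.sum_congr rfl (fun j' _ => key j j'))]
  set z0 : Fin n := ⟨0, hn⟩ with hz0
  have inner : ∀ j : Fin n, (∑ j' : Fin n, if j.1 = 0 ∧ 0 < j'.1 then (1:ℝ) else 0)
      = if j = z0 then (n:ℝ) - 1 else 0 := by
    intro j
    by_cases hj : j = z0
    · rw [if_pos hj]
      have hterm : ∀ j' : Fin n, (if j.1 = 0 ∧ 0 < j'.1 then (1:ℝ) else 0)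
          = 1 - (if j' = z0 then 1 else 0) := by
        intro j'
        by_cases h : j' = z0
        · rw [if_pos h, if_neg (by rintro ⟨-, hpos⟩; rw [h] at hpos; exact Nat.lt_irrefl 0 hpos)]
          norm_num
        · have : 0 < j'.1 := by
            rcases Nat.eq_zero_or_pos j'.1 with h0 | h0
            · exact absurd ((Fin.ext h0 : j' = z0)) h
            · exact h0
          rw [if_pos ⟨by rw [hj], this⟩, if_neg h]
          norm_num
      rw [Finset.sum_congr rfl (fun j' _ => hterm j'), Finset.sum_sub_distrib,
        Finset.sum_const, Finset.card_univ, Fintype.card_fin,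
        Finset.sum_ite_eq' Finset.univ z0 (fun _ => (1:ℝ)), if_pos (Finset.mem_univ z0)]
      rw [nsmul_eq_mul, mul_one]
    · rw [if_neg hj]
      refine Finset.sum_eq_zero (fun j' _ => ?_)
      rw [if_neg]
      rintro ⟨h1, _⟩
      exact hj (Fin.ext h1)
  rw [Finset.sum_congr rfl (fun j _ => inner j),
    Finset.sum_ite_eq' Finset.univ z0 (fun _ => (n:ℝ) - 1), if_pos (Finset.mem_univ z0)]
end
end

section
/- Let H1, H2 be Hermitian N×N matrices. Then for any τ ≥ 0, ‖exp(iτ(H1+H2)) − exp(iτ H1) exp(iτ H2)‖ ≤ (τ²/2)·‖[H1, H2]‖ in the operator norm. -/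
open Matrix
open scoped Matrix.Norms.L2Operator

namespace TrotterAux

open NormedSpace Set

variable {N : ℕ}

lemma continuousStar_matrix : ContinuousStar (Matrix (Fin N) (Fin N) ℂ) := by
  refine ⟨(LipschitzWith.of_dist_le_mul (K := 1) fun x y => ?_).continuous⟩
  simp only [dist_eq_norm, Matrix.star_eq_conjTranspose, ← Matrix.conjTranspose_sub,
    Matrix.l2_opNorm_conjTranspose, one_mul, le_refl, NNReal.coe_one]

lemma star_smul_I {a : Matrix (Fin N) (Fin N) ℂ} (ha : a.IsHermitian) (s : ℝ) :
    star (s • (Complex.I • a)) = -(s • (Complex.I • a)) := by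
  rw [← Complex.coe_smul, smul_smul]
  rw [Matrix.star_eq_conjTranspose, Matrix.conjTranspose_smul, ha.eq, ← neg_smul]
  congr 1
  simp [Complex.star_def, _root_.map_mul, Complex.conj_ofReal, Complex.conj_I, mul_neg]

lemma norm_exp_one [NeZero N] {a : Matrix (Fin N) (Fin N) ℂ} (ha : a.IsHermitian) (s : ℝ) :
    ‖exp (s • (Complex.I • a))‖ = 1 := by
  haveI := continuousStar_matrix (N := N)
  set x := s • (Complex.I • a) with hx
  have hstar : star (exp x) = exp (-x) := by
    rw [star_exp, hx, star_smul_I ha]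
  have h1 : star (exp x) * exp x = 1 := by
    rw [hstar, ← Matrix.exp_add_of_commute _ _ ((Commute.refl x).neg_left), neg_add_cancel, exp_zero]
  have h2 := CStarRing.norm_star_mul_self (x := exp x)
  rw [h1, CStarRing.norm_one] at h2
  nlinarith [norm_nonneg (exp x)]

theorem main_aux [NeZero N] (H1 H2 : Matrix (Fin N) (Fin N) ℂ)
    (h1 : H1.IsHermitian) (h2 : H2.IsHermitian) (τ : ℝ) (hτ : 0 ≤ τ) :
    ‖exp (τ • (Complex.I • (H1 + H2))) -
        exp (τ • (Complex.I • H1)) * exp (τ • (Complex.I • H2))‖ ≤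
      ‖(Complex.I • H1) * (Complex.I • H2) - (Complex.I • H2) * (Complex.I • H1)‖ * (τ ^ 2 / 2) := by
  set B1 : Matrix (Fin N) (Fin N) ℂ := Complex.I • H1 with hB1
  set B2 : Matrix (Fin N) (Fin N) ℂ := Complex.I • H2 with hB2
  set C : Matrix (Fin N) (Fin N) ℂ := B1 * B2 - B2 * B1 with hC
  -- norms of the various exponentials
  have nE1 : ∀ s : ℝ, ‖exp (s • B1)‖ = 1 := fun s => norm_exp_one h1 s
  have nE2 : ∀ s : ℝ, ‖exp (s • B2)‖ = 1 := fun s => norm_exp_one h2 s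
  have hnegB1 : -B1 = Complex.I • (-H1) := by rw [smul_neg]
  have nE1m : ∀ s : ℝ, ‖exp (s • (-B1))‖ = 1 := by
    intro s; rw [hnegB1]; exact norm_exp_one h1.neg s
  have hnegB : -(B1 + B2) = Complex.I • (-(H1 + H2)) := by
    rw [smul_neg, hB1, hB2, smul_add]
  have nEm : ∀ s : ℝ, ‖exp (s • (-(B1 + B2)))‖ = 1 := by
    intro s; rw [hnegB]; exact norm_exp_one (h1.add h2).neg s
  -- inverse relations
  have hinv1 : ∀ s : ℝ, exp (s • (-B1)) * exp (s • B1) = 1 := by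
    intro s
    rw [← Matrix.exp_add_of_commute _ _ (((Commute.refl B1).neg_left).smul_left s |>.smul_right s),
      ← smul_add, neg_add_cancel, smul_zero, exp_zero]
  have hEEm : exp (τ • (B1 + B2)) * exp (τ • (-(B1 + B2))) = 1 := by
    rw [← Matrix.exp_add_of_commute _ _ (((Commute.refl (B1 + B2)).neg_right).smul_left τ |>.smul_right τ),
      ← smul_add, add_neg_cancel, smul_zero, exp_zero]
  -- commutation relations
  have hc1 : ∀ s : ℝ, ∀ x, exp (s • B1) * (B1 * x) = B1 * (exp (s • B1) * x) := by
    intro s x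
    have hcm : Commute B1 (exp (s • B1)) := ((Commute.refl B1).smul_right s).exp_right
    rw [← mul_assoc, ← hcm.eq, mul_assoc]
  have hc1m : ∀ s : ℝ, exp (s • (-B1)) * B1 = B1 * exp (s • (-B1)) := by
    intro s
    exact (((Commute.refl B1).neg_right.smul_right s).exp_right).eq.symm
  have hc2 : ∀ s : ℝ, exp (s • B2) * B2 = B2 * exp (s • B2) := by
    intro s
    exact (((Commute.refl B2).smul_right s).exp_right).eq.symm
  -- derivatives of the exponentials
  have dE1 : ∀ s : ℝ, HasDerivAt (fun u : ℝ => exp (u • B1)) (exp (s • B1) * B1) s :=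
    fun s => hasDerivAt_exp_smul_const B1 s
  have dE2 : ∀ s : ℝ, HasDerivAt (fun u : ℝ => exp (u • B2)) (exp (s • B2) * B2) s :=
    fun s => hasDerivAt_exp_smul_const B2 s
  have dE1m : ∀ s : ℝ, HasDerivAt (fun u : ℝ => exp (u • (-B1)))
      (exp (s • (-B1)) * (-B1)) s := fun s => hasDerivAt_exp_smul_const (-B1) s
  have dEm : ∀ s : ℝ, HasDerivAt (fun u : ℝ => exp (u • (-(B1 + B2))))
      (exp (s • (-(B1 + B2))) * (-(B1 + B2))) s :=
    fun s => hasDerivAt_exp_smul_const (-(B1 + B2)) s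
  -- the conjugated commutator function h
  set h : ℝ → Matrix (Fin N) (Fin N) ℂ :=
    fun s => exp (s • B1) * (B2 * exp (s • (-B1))) with hh
  have dh : ∀ s : ℝ, HasDerivAt h (exp (s • B1) * (C * exp (s • (-B1)))) s := by
    intro s
    have raw := (dE1 s).mul ((dE1m s).const_mul B2)
    refine raw.congr_deriv ?_
    simp only [hC, sub_mul, mul_sub, mul_assoc, mul_neg, neg_mul, hc1m s]
    abel
  have h0 : h 0 = B2 := by simp [hh]
  have hbound : ∀ s ∈ Icc (0:ℝ) τ, ‖h s - B2‖ ≤ ‖C‖ * s := by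
    intro s hs
    have bnd : ∀ x ∈ Ico (0:ℝ) τ, ‖exp (x • B1) * (C * exp (x • (-B1)))‖ ≤ ‖C‖ := by
      intro x _
      refine le_trans (norm_mul_le _ _) ?_
      rw [nE1 x, one_mul]
      refine le_trans (norm_mul_le _ _) ?_
      rw [nE1m x, mul_one]
    have key := norm_image_sub_le_of_norm_deriv_le_segment'
      (f := h) (f' := fun s => exp (s • B1) * (C * exp (s • (-B1)))) (a := 0) (b := τ)
      (fun x _ => (dh x).hasDerivWithinAt) bnd s hs
    rw [h0] at key; simpa using key
  -- bound on the commutator with the exponential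
  have hgeq : ∀ s : ℝ, exp (s • B1) * B2 - B2 * exp (s • B1)
      = (h s - B2) * exp (s • B1) := by
    intro s
    rw [sub_mul, hh]
    congr 1
    rw [mul_assoc, mul_assoc, hinv1 s, mul_one]
  have hgbound : ∀ s ∈ Icc (0:ℝ) τ, ‖exp (s • B1) * B2 - B2 * exp (s • B1)‖ ≤ ‖C‖ * s := by
    intro s hs
    rw [hgeq s]
    refine le_trans (norm_mul_le _ _) ?_
    rw [nE1 s, mul_one]
    exact hbound s hs
  -- the function f measuring the Trotter defect
  set f : ℝ → Matrix (Fin N) (Fin N) ℂ :=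
    fun s => exp (s • (-(B1 + B2))) * (exp (s • B1) * exp (s • B2)) - 1 with hf
  set f' : ℝ → Matrix (Fin N) (Fin N) ℂ :=
    fun s => exp (s • (-(B1 + B2))) *
      ((exp (s • B1) * B2 - B2 * exp (s • B1)) * exp (s • B2)) with hf'
  have df : ∀ s : ℝ, HasDerivAt f (f' s) s := by
    intro s
    have raw := ((dEm s).mul ((dE1 s).mul (dE2 s))).sub_const 1
    refine raw.congr_deriv ?_
    simp only [hf', sub_mul, mul_sub, mul_add, add_mul, neg_add, mul_neg, neg_mul,
      mul_assoc, hc1 s, hc2 s, Pi.mul_apply]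
    abel
  have fbound : ∀ s ∈ Ico (0:ℝ) τ, ‖f' s‖ ≤ ‖C‖ * s := by
    intro s hs
    rw [hf']
    refine le_trans (norm_mul_le _ _) ?_
    rw [nEm s, one_mul]
    refine le_trans (norm_mul_le _ _) ?_
    rw [nE2 s, mul_one]
    exact hgbound s ⟨hs.1, le_of_lt hs.2⟩
  have hB : ∀ x : ℝ, HasDerivAt (fun x : ℝ => ‖C‖ * (x ^ 2 / 2)) (‖C‖ * x) x := by
    intro x
    have := ((hasDerivAt_pow 2 x).div_const 2).const_mul ‖C‖
    refine this.congr_deriv ?_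
    push_cast
    ring
  have hf0 : ‖f 0‖ ≤ ‖C‖ * ((0:ℝ) ^ 2 / 2) := by simp [hf]
  have hcont : ContinuousOn f (Icc 0 τ) :=
    (continuous_iff_continuousAt.mpr fun x => (df x).continuousAt).continuousOn
  have key : ‖f τ‖ ≤ ‖C‖ * (τ ^ 2 / 2) :=
    image_norm_le_of_norm_deriv_right_le_deriv_boundary hcont
      (fun x hx => (df x).hasDerivWithinAt) hf0 hB fbound
      (right_mem_Icc.mpr hτ)
  -- final assembly
  have hfin : exp (τ • (B1 + B2)) * f τ
      = exp (τ • B1) * exp (τ • B2) - exp (τ • (B1 + B2)) := by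
    rw [hf, mul_sub, mul_one, ← mul_assoc, hEEm, one_mul]
  have hsmul : τ • (Complex.I • (H1 + H2)) = τ • (B1 + B2) := by
    rw [hB1, hB2, smul_add]
  rw [hsmul, ← norm_neg, neg_sub, ← hfin]
  refine le_trans (norm_mul_le _ _) ?_
  have : ‖exp (τ • (B1 + B2))‖ = 1 := by
    have : B1 + B2 = Complex.I • (H1 + H2) := by rw [hB1, hB2, smul_add]
    rw [this]; exact norm_exp_one (h1.add h2) τ
  rw [this, one_mul]
  exact key

end TrotterAux

/-- First-order Lie–Trotter error bound with commutator scaling. -/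
theorem stmt_5 (N : ℕ) (H1 H2 : Matrix (Fin N) (Fin N) ℂ)
    (h1 : H1.IsHermitian) (h2 : H2.IsHermitian) (τ : ℝ) (hτ : 0 ≤ τ) :
    ‖NormedSpace.exp ((Complex.I * τ) • (H1 + H2)) -
        NormedSpace.exp ((Complex.I * τ) • H1) * NormedSpace.exp ((Complex.I * τ) • H2)‖ ≤
      τ ^ 2 / 2 * ‖H1 * H2 - H2 * H1‖ := by
  rcases Nat.eq_zero_or_pos N with hN | hN
  · subst hN
    haveI : Subsingleton (Matrix (Fin 0) (Fin 0) ℂ) :=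
      ⟨fun a b => by ext i j; exact i.elim0⟩
    rw [Subsingleton.elim (NormedSpace.exp ((Complex.I * τ) • (H1 + H2)) -
      NormedSpace.exp ((Complex.I * τ) • H1) * NormedSpace.exp ((Complex.I * τ) • H2)) 0,
      norm_zero]
    positivity
  · haveI : NeZero N := ⟨hN.ne'⟩
    have hsm : ∀ M : Matrix (Fin N) (Fin N) ℂ, (Complex.I * τ) • M = τ • (Complex.I • M) := by
      intro M
      rw [mul_comm, mul_smul, Complex.coe_smul]
    have hmain := TrotterAux.main_aux H1 H2 h1 h2 τ hτ
    rw [hsm, hsm, hsm]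
    refine le_trans hmain (le_of_eq ?_)
    have hcomm : (Complex.I • H1) * (Complex.I • H2) - (Complex.I • H2) * (Complex.I • H1)
        = -(H1 * H2 - H2 * H1) := by
      simp [Matrix.smul_mul, Matrix.mul_smul, smul_smul, Complex.I_mul_I, neg_smul,
        neg_sub_neg, neg_sub]
      abel
    rw [hcomm, norm_neg, mul_comm]
end

section
/- Let H1 and H2 be Hermitian, and let η_k ∈ R for k = 0,...,m−1. Then ‖exp(iτ(Σ_k η_k H1 ⊗ |k⟩⟨k| + H2 ⊗ I_m)) − exp(iτ H2 ⊗ I_m) exp(iτ Σ_k η_k H1 ⊗ |k⟩⟨k|)‖ ≤ (τ²/2) max_k |η_k| ‖[H1, H2]‖. -/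
open Matrix
open scoped Matrix.Norms.L2Operator

noncomputable section

namespace TrotterAux

open NormedSpace intervalIntegral

variable {n : ℕ}

/-- `eE M s = exp(s M)` -/
def eE (M : Matrix (Fin n) (Fin n) ℂ) (s : ℝ) : Matrix (Fin n) (Fin n) ℂ :=
  exp (s • M)

lemma eE_zero (M : Matrix (Fin n) (Fin n) ℂ) : eE M 0 = 1 := by
  simp [eE, exp_zero]

lemma eE_deriv (M : Matrix (Fin n) (Fin n) ℂ) (s : ℝ) :
    HasDerivAt (eE M) (M * eE M s) s := by
  have h := hasDerivAt_exp_smul_const' (𝕂 := ℝ) M s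
  exact h

lemma eE_cont (M : Matrix (Fin n) (Fin n) ℂ) : Continuous (eE M) :=
  letI : NormedAlgebra ℚ (Matrix (Fin n) (Fin n) ℂ) := .restrictScalars ℚ ℂ _
  exp_continuous.comp (continuous_id.smul continuous_const)

lemma eE_mul_eE_neg (M : Matrix (Fin n) (Fin n) ℂ) (s : ℝ) :
    eE M s * eE (-M) s = 1 := by
  rw [eE, eE, smul_neg, ← Matrix.exp_add_of_commute (s • M) _ (Commute.neg_right (Commute.refl _))]
  simp

lemma eE_unitary {M : Matrix (Fin n) (Fin n) ℂ} (hM : Mᴴ = -M) (s : ℝ) :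
    eE M s ∈ unitary (Matrix (Fin n) (Fin n) ℂ) := by
  letI : NormedAlgebra ℚ (Matrix (Fin n) (Fin n) ℂ) := .restrictScalars ℚ ℂ _
  refine exp_mem_unitary_of_mem_skewAdjoint ?_
  rw [skewAdjoint.mem_iff, star_smul, star_trivial, star_eq_conjTranspose, hM, smul_neg]

lemma eE_norm_l {M : Matrix (Fin n) (Fin n) ℂ} (hM : Mᴴ = -M) (s : ℝ)
    (A : Matrix (Fin n) (Fin n) ℂ) : ‖eE M s * A‖ = ‖A‖ :=
  CStarRing.norm_mem_unitary_mul A (eE_unitary hM s)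

lemma eE_norm_r {M : Matrix (Fin n) (Fin n) ℂ} (hM : Mᴴ = -M) (s : ℝ)
    (A : Matrix (Fin n) (Fin n) ℂ) : ‖A * eE M s‖ = ‖A‖ :=
  CStarRing.norm_mul_mem_unitary A (eE_unitary hM s)

lemma eE_commute (M : Matrix (Fin n) (Fin n) ℂ) (s : ℝ) :
    M * eE M s = eE M s * M :=
  (((Commute.refl M).smul_right s).exp_right : Commute M (eE M s))

/-- The core Trotter commutator bound for skew-adjoint matrices. -/
theorem trotter_core (X Y : Matrix (Fin n) (Fin n) ℂ)
    (hX : Xᴴ = -X) (hY : Yᴴ = -Y) :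
    ‖exp (Y + X) - exp X * exp Y‖ ≤ ‖X * Y - Y * X‖ / 2 := by
  set C : ℝ := ‖X * Y - Y * X‖ with hC
  have hC0 : 0 ≤ C := norm_nonneg _
  set Z : Matrix (Fin n) (Fin n) ℂ := -(Y + X) with hZdef
  have hZ : Zᴴ = -Z := by rw [hZdef]; simp [hX, hY, add_comm]
  have hnY : (-Y)ᴴ = -(-Y) := by simp [hY]
  -- commutator growth bound
  have hK : ∀ s : ℝ, ‖X * eE Y s - eE Y s * X‖ ≤ |s| * C := by
    intro s
    have hLderiv : ∀ u : ℝ, HasDerivAt (fun u => eE (-Y) u * X * eE Y u)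
        (eE (-Y) u * (X * Y - Y * X) * eE Y u) u := by
      intro u
      have h1 : HasDerivAt (fun u => eE (-Y) u * X * eE Y u)
          ((-Y * eE (-Y) u) * X * eE Y u + (eE (-Y) u * X) * (Y * eE Y u)) u :=
        ((eE_deriv (-Y) u).mul_const X).mul (eE_deriv Y u)
      convert h1 using 1
      rw [eE_commute (-Y) u]
      noncomm_ring
    have hFTC : (∫ u in (0:ℝ)..s, eE (-Y) u * (X * Y - Y * X) * eE Y u)
        = eE (-Y) s * X * eE Y s - eE (-Y) 0 * X * eE Y 0 := by
      refine integral_eq_sub_of_hasDerivAt (fun u _ => hLderiv u) ?_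
      exact (((eE_cont (-Y)).mul continuous_const).mul (eE_cont Y)).intervalIntegrable _ _
    have hLs : ‖eE (-Y) s * X * eE Y s - X‖ ≤ C * |s - 0| := by
      have h0 : eE (-Y) 0 * X * eE Y 0 = X := by simp [eE_zero]
      have heq : eE (-Y) s * X * eE Y s - X
          = ∫ u in (0:ℝ)..s, eE (-Y) u * (X * Y - Y * X) * eE Y u := by
        rw [hFTC, h0]
      rw [heq]
      refine norm_integral_le_of_norm_le_const fun u _ => ?_
      rw [eE_norm_r hY, eE_norm_l hnY]
    have hKL : X * eE Y s - eE Y s * X = eE Y s * (eE (-Y) s * X * eE Y s - X) := by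
      rw [mul_sub]
      simp only [← mul_assoc]
      rw [eE_mul_eE_neg Y s, one_mul]
    rw [hKL, eE_norm_l hY]
    simpa [mul_comm] using hLs
  -- the interpolation function G
  have hGderiv : ∀ s : ℝ, HasDerivAt (fun s => eE X s * eE Y s * eE Z s)
      (eE X s * (X * eE Y s - eE Y s * X) * eE Z s) s := by
    intro s
    have h1 : HasDerivAt (fun s => eE X s * eE Y s * eE Z s)
        (((X * eE X s) * eE Y s + eE X s * (Y * eE Y s)) * eE Z s
          + (eE X s * eE Y s) * (Z * eE Z s)) s :=
      ((eE_deriv X s).mul (eE_deriv Y s)).mul (eE_deriv Z s)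
    convert h1 using 1
    rw [eE_commute X s, hZdef]
    have c2 := eE_commute Y s
    generalize eE X s = a at *
    generalize eE Y s = b at *
    generalize eE Z s = c at *
    rw [show a * X * b + a * (Y * b) = a * X * b + a * (b * Y) by rw [c2]]
    noncomm_ring
  have hFTC : (∫ s in (0:ℝ)..1, eE X s * (X * eE Y s - eE Y s * X) * eE Z s)
      = eE X 1 * eE Y 1 * eE Z 1 - eE X 0 * eE Y 0 * eE Z 0 := by
    refine integral_eq_sub_of_hasDerivAt (fun s _ => hGderiv s) ?_
    refine Continuous.intervalIntegrable ?_ _ _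
    exact ((eE_cont X).mul (((continuous_const.mul (eE_cont Y)).sub
      ((eE_cont Y).mul continuous_const)))).mul (eE_cont Z)
  -- the main estimate
  have key : ‖eE X 1 * eE Y 1 * eE Z 1 - eE X 0 * eE Y 0 * eE Z 0‖ ≤ C / 2 := by
    rw [← hFTC]
    have hb : ∀ s ∈ Set.uIoc (0:ℝ) 1,
        ‖eE X s * (X * eE Y s - eE Y s * X) * eE Z s‖ ≤ s * C := by
      intro s hs
      rw [eE_norm_r hZ, eE_norm_l hX]
      have hs0 : 0 < s := by
        rcases Set.mem_uIoc.mp hs with h | h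
        · exact h.1
        · linarith [h.1, h.2]
      calc ‖X * eE Y s - eE Y s * X‖ ≤ |s| * C := hK s
        _ = s * C := by rw [abs_of_pos hs0]
    have h2 := norm_integral_le_of_norm_le (μ := MeasureTheory.volume) (a := (0:ℝ)) (b := 1)
      (f := fun s => eE X s * (X * eE Y s - eE Y s * X) * eE Z s) (g := fun s => s * C)
      zero_le_one (MeasureTheory.ae_of_all _ fun t ht => hb t (by rwa [Set.uIoc_of_le zero_le_one]))
      ((continuous_id.mul continuous_const).intervalIntegrable _ _)
    refine h2.trans (le_of_eq ?_)
    rw [intervalIntegral.integral_mul_const, integral_id,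
      show ((1:ℝ)^2 - 0^2)/2 * C = C/2 by ring]
  -- conclude
  have hz1 : eE Z 1 * exp (Y + X) = 1 := by
    have h := eE_mul_eE_neg Z 1
    rwa [show eE (-Z) 1 = exp (Y + X) by rw [eE, hZdef, neg_neg, one_smul]] at h
  have hfinal : exp (Y + X) - exp X * exp Y
      = (eE X 0 * eE Y 0 * eE Z 0 - eE X 1 * eE Y 1 * eE Z 1) * exp (Y + X) := by
    rw [sub_mul]
    congr 1
    · simp [eE_zero]
    · rw [mul_assoc, hz1, mul_one, eE, eE, one_smul, one_smul]
  rw [hfinal, CStarRing.norm_mul_mem_unitary _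
    (by simpa [eE, one_smul] using eE_unitary (M := Y + X) (by simp [hX, hY, add_comm]) 1),
    norm_sub_rev]
  exact key

lemma kron_conjTranspose {a b : ℕ} (A : Matrix (Fin a) (Fin a) ℂ)
    (B : Matrix (Fin b) (Fin b) ℂ) : (kron A B)ᴴ = kron Aᴴ Bᴴ := by
  ext p q
  simp [kron, conjTranspose_apply, mul_comm]

lemma kron_mul {a b : ℕ} (A A' : Matrix (Fin a) (Fin a) ℂ)
    (B B' : Matrix (Fin b) (Fin b) ℂ) :
    kron A B * kron A' B' = kron (A * A') (B * B') := by
  unfold kron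
  rw [reindex_apply, reindex_apply, reindex_apply, submatrix_mul_equiv,
    ← Matrix.mul_kronecker_mul]

lemma kron_sub_left {a b : ℕ} (A A' : Matrix (Fin a) (Fin a) ℂ)
    (B : Matrix (Fin b) (Fin b) ℂ) :
    kron (A - A') B = kron A B - kron A' B := by
  ext p q
  simp [kron, sub_mul]

lemma l2_opNorm_le_bound {d d' : ℕ} (A : Matrix (Fin d) (Fin d') ℂ) {K : ℝ} (hK : 0 ≤ K)
    (h : ∀ x : EuclideanSpace ℂ (Fin d'),
      ‖(EuclideanSpace.equiv (Fin d) ℂ).symm (A.mulVec x)‖ ≤ K * ‖x‖) : ‖A‖ ≤ K := by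
  rw [l2_opNorm_def]
  exact ContinuousLinearMap.opNorm_le_bound _ hK h

lemma block_entry {N m : ℕ} (C : Matrix (Fin N) (Fin N) ℂ) (η : Fin m → ℝ)
    (i j : Fin N) (k l : Fin m) :
    (∑ k' : Fin m, (η k' : ℂ) • kron C (Matrix.single k' k' 1))
      (finProdFinEquiv (i, k)) (finProdFinEquiv (j, l))
      = (if k = l then (η k : ℂ) else 0) * C i j := by
  simp only [Matrix.sum_apply, Matrix.smul_apply, kron, reindex_apply, submatrix_apply,
    Equiv.symm_apply_apply, kroneckerMap_apply, Matrix.single, Matrix.of_apply,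
    smul_eq_mul, mul_ite, mul_one, mul_zero, ite_and]
  rw [Finset.sum_ite_eq' Finset.univ k
    (fun k' => if (k' : Fin m) = l then (η k' : ℂ) * C i j else 0)]
  simp [eq_comm]

lemma block_norm {N m : ℕ} (C : Matrix (Fin N) (Fin N) ℂ) (η : Fin m → ℝ) {c : ℝ}
    (hc : ∀ k, |η k| ≤ c) (hc0 : 0 ≤ c) :
    ‖∑ k : Fin m, (η k : ℂ) • kron C (Matrix.single k k 1)‖ ≤ c * ‖C‖ := by
  refine l2_opNorm_le_bound _ (by positivity) ?_
  intro x
  set e := (finProdFinEquiv : Fin N × Fin m ≃ Fin (N * m)) with he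
  set M := ∑ k' : Fin m, (η k' : ℂ) • kron C (Matrix.single k' k' 1) with hM
  set xk : Fin m → EuclideanSpace ℂ (Fin N) :=
    fun k => (EuclideanSpace.equiv (Fin N) ℂ).symm (fun j => x (e (j, k))) with hxk
  have hmv : ∀ (i : Fin N) (k : Fin m),
      (M.mulVec x) (e (i, k)) = (η k : ℂ) * (C.mulVec (xk k)) i := by
    intro i k
    rw [mulVec, dotProduct]
    rw [← Equiv.sum_comp e (fun q => M (e (i, k)) q * x q), Fintype.sum_prod_type]
    rw [Finset.sum_comm]
    have : ∀ l : Fin m, ∑ j : Fin N, M (e (i,k)) (e (j,l)) * x (e (j,l))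
        = if k = l then ∑ j, (η k : ℂ) * (C i j * x (e (j, k))) else 0 := by
      intro l
      by_cases hkl : k = l
      · subst hkl
        simp only [if_pos rfl]
        refine Finset.sum_congr rfl fun j _ => ?_
        rw [hM, he, block_entry]
        simp [mul_assoc]
      · simp only [if_neg hkl]
        refine Finset.sum_eq_zero fun j _ => ?_
        rw [hM, he, block_entry, if_neg hkl]
        simp
    rw [Finset.sum_congr rfl fun l _ => this l]
    simp [Finset.mul_sum, mulVec, dotProduct, hxk]
  have hnorm_sq : ∀ (d : ℕ) (y : EuclideanSpace ℂ (Fin d)), ‖y‖^2 = ∑ i, ‖y i‖^2 := by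
    intro d y
    rw [EuclideanSpace.norm_eq, Real.sq_sqrt (by positivity)]
  have key : ‖(EuclideanSpace.equiv (Fin (N*m)) ℂ).symm (M.mulVec x)‖^2
      ≤ (c * ‖C‖ * ‖x‖)^2 := by
    rw [hnorm_sq]
    have expand : ∑ p, ‖((EuclideanSpace.equiv (Fin (N*m)) ℂ).symm (M.mulVec x)) p‖^2
        = ∑ k, ∑ i, (|η k| * ‖(C.mulVec (xk k)) i‖)^2 := by
      rw [← Equiv.sum_comp e (fun p => ‖((EuclideanSpace.equiv (Fin (N*m)) ℂ).symm
        (M.mulVec x)) p‖^2), Fintype.sum_prod_type, Finset.sum_comm]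
      refine Finset.sum_congr rfl fun k _ => Finset.sum_congr rfl fun i _ => ?_
      have : ((EuclideanSpace.equiv (Fin (N*m)) ℂ).symm (M.mulVec x)) (e (i,k))
          = (η k : ℂ) * (C.mulVec (xk k)) i := hmv i k
      rw [this, norm_mul, Complex.norm_real, Real.norm_eq_abs]
    rw [expand]
    have step : ∀ k : Fin m, ∑ i, (|η k| * ‖(C.mulVec (xk k)) i‖)^2
        ≤ c^2 * ‖C‖^2 * ‖xk k‖^2 := by
      intro k
      have h1 : ∑ i, (|η k| * ‖(C.mulVec (xk k)) i‖)^2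
          = |η k|^2 * ‖(EuclideanSpace.equiv (Fin N) ℂ).symm (C.mulVec (xk k))‖^2 := by
        rw [hnorm_sq, Finset.mul_sum]
        refine Finset.sum_congr rfl fun i _ => by ring_nf; rfl
      rw [h1]
      have h2 : ‖(EuclideanSpace.equiv (Fin N) ℂ).symm (C.mulVec (xk k))‖ ≤ ‖C‖ * ‖xk k‖ :=
        l2_opNorm_mulVec C (xk k)
      calc |η k|^2 * ‖(EuclideanSpace.equiv (Fin N) ℂ).symm (C.mulVec (xk k))‖^2
          ≤ c^2 * (‖C‖ * ‖xk k‖)^2 := by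
            refine mul_le_mul (by nlinarith [hc k, abs_nonneg (η k)]) ?_ (by positivity)
              (by positivity)
            exact pow_le_pow_left₀ (norm_nonneg _) h2 2
        _ = c^2 * ‖C‖^2 * ‖xk k‖^2 := by ring
    have hx2 : ∑ k, ‖xk k‖^2 = ‖x‖^2 := by
      rw [hnorm_sq]
      rw [← Equiv.sum_comp e (fun p => ‖x p‖^2), Fintype.sum_prod_type, Finset.sum_comm]
      refine Finset.sum_congr rfl fun k _ => ?_
      rw [hnorm_sq]
      rfl
    calc ∑ k, ∑ i, (|η k| * ‖(C.mulVec (xk k)) i‖)^2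
        ≤ ∑ k, c^2 * ‖C‖^2 * ‖xk k‖^2 := Finset.sum_le_sum fun k _ => step k
      _ = c^2 * ‖C‖^2 * ∑ k, ‖xk k‖^2 := by rw [← Finset.mul_sum]
      _ = (c * ‖C‖ * ‖x‖)^2 := by rw [hx2]; ring
  have h0 : (0:ℝ) ≤ c * ‖C‖ * ‖x‖ := by positivity
  nlinarith [norm_nonneg ((EuclideanSpace.equiv (Fin (N*m)) ℂ).symm (M.mulVec x))]

end TrotterAux

open TrotterAux

/-- Trotter splitting across the auxiliary register. -/
theorem stmt_9 (N m : ℕ) (H1 H2 : Matrix (Fin N) (Fin N) ℂ)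
    (h1 : H1.IsHermitian) (h2 : H2.IsHermitian) (η : Fin m → ℝ) (τ : ℝ) :
    ‖NormedSpace.exp ((Complex.I * τ) •
        (∑ k : Fin m, (η k : ℂ) • kron H1 (Matrix.single k k 1) + kron H2 1)) -
      NormedSpace.exp ((Complex.I * τ) • kron H2 1) *
        NormedSpace.exp ((Complex.I * τ) •
          ∑ k : Fin m, (η k : ℂ) • kron H1 (Matrix.single k k 1))‖ ≤
      τ ^ 2 / 2 * (⨆ k : Fin m, |η k|) * ‖H1 * H2 - H2 * H1‖ := by
  rcases Nat.eq_zero_or_pos m with hm | hm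
  · subst hm
    have hz : ∀ (P : Matrix (Fin (N * 0)) (Fin (N * 0)) ℂ), P = 0 := by
      intro P; ext p q; exact absurd p.isLt (by omega)
    rw [show (NormedSpace.exp ((Complex.I * τ) •
        (∑ k : Fin 0, (η k : ℂ) • kron H1 (Matrix.single k k 1) + kron H2 1)) -
      NormedSpace.exp ((Complex.I * τ) • kron H2 1) *
        NormedSpace.exp ((Complex.I * τ) •
          ∑ k : Fin 0, (η k : ℂ) • kron H1 (Matrix.single k k 1))) = 0 from hz _,
      norm_zero, Real.iSup_of_isEmpty]
    simp
  · haveI : Nonempty (Fin m) := ⟨⟨0, hm⟩⟩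
    set c : ℝ := ⨆ k : Fin m, |η k| with hcdef
    have hc : ∀ k, |η k| ≤ c := fun k => le_ciSup (f := fun k => |η k|) (Set.Finite.bddAbove (Set.finite_range _)) k
    have hc0 : 0 ≤ c := (abs_nonneg _).trans (hc (Classical.arbitrary _))
    set S : Matrix (Fin (N * m)) (Fin (N * m)) ℂ :=
      ∑ k : Fin m, (η k : ℂ) • kron H1 (Matrix.single k k 1) with hSdef
    set A : Matrix (Fin (N * m)) (Fin (N * m)) ℂ := kron H2 1 with hAdef
    have hP : ∀ k : Fin m, (Matrix.single k k (1:ℂ))ᴴ = Matrix.single k k 1 := by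
      intro k
      ext a b
      simp [conjTranspose_apply, Matrix.single, and_comm]
    have hSH : Sᴴ = S := by
      rw [hSdef, conjTranspose_sum]
      refine Finset.sum_congr rfl fun k _ => ?_
      rw [conjTranspose_smul, kron_conjTranspose, h1.eq, hP k]
      congr 1
      simp [Complex.star_def, Complex.conj_ofReal]
    have hAH : Aᴴ = A := by
      rw [hAdef, kron_conjTranspose, h2.eq, conjTranspose_one]
    have hstar : star (Complex.I * (τ:ℂ)) = -(Complex.I * τ) := by
      simp [Complex.star_def, Complex.conj_ofReal]
    have hX : ((Complex.I * (τ:ℂ)) • A)ᴴ = -((Complex.I * (τ:ℂ)) • A) := by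
      rw [conjTranspose_smul, hAH, hstar, neg_smul]
    have hY : ((Complex.I * (τ:ℂ)) • S)ᴴ = -((Complex.I * (τ:ℂ)) • S) := by
      rw [conjTranspose_smul, hSH, hstar, neg_smul]
    have main := trotter_core ((Complex.I * (τ:ℂ)) • A) ((Complex.I * (τ:ℂ)) • S) hX hY
    rw [show (Complex.I * (τ:ℂ)) • S + (Complex.I * (τ:ℂ)) • A
        = (Complex.I * (τ:ℂ)) • (S + A) from (smul_add _ _ _).symm] at main
    refine main.trans ?_
    -- compute the commutator
    have hcomm : ((Complex.I * (τ:ℂ)) • A) * ((Complex.I * (τ:ℂ)) • S)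
        - ((Complex.I * (τ:ℂ)) • S) * ((Complex.I * (τ:ℂ)) • A)
        = ((Complex.I * (τ:ℂ)) * (Complex.I * (τ:ℂ))) • (A * S - S * A) := by
      rw [smul_mul_assoc, smul_mul_assoc, mul_smul_comm, mul_smul_comm, smul_smul, smul_smul, smul_sub]
    have hAS : A * S - S * A
        = ∑ k : Fin m, (η k : ℂ) • kron (H2 * H1 - H1 * H2) (Matrix.single k k 1) := by
      rw [hAdef, hSdef, Finset.mul_sum, Finset.sum_mul, ← Finset.sum_sub_distrib]
      refine Finset.sum_congr rfl fun k _ => ?_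
      rw [mul_smul_comm, smul_mul_assoc, ← smul_sub, kron_mul, kron_mul, one_mul, mul_one,
        kron_sub_left]
    have hnormAS : ‖A * S - S * A‖ ≤ c * ‖H1 * H2 - H2 * H1‖ := by
      rw [hAS]
      have := block_norm (H2 * H1 - H1 * H2) η hc hc0
      rwa [norm_sub_rev (H2 * H1)] at this
    rw [hcomm, norm_smul]
    have hsc : ‖Complex.I * (τ:ℂ) * (Complex.I * (τ:ℂ))‖ = τ^2 := by
      simp only [norm_mul, Complex.norm_I, Complex.norm_real, Real.norm_eq_abs, one_mul]
      rw [← sq_abs]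
      ring
    rw [hsc]
    calc τ^2 * ‖A * S - S * A‖ / 2 ≤ τ^2 * (c * ‖H1 * H2 - H2 * H1‖) / 2 := by
          have h := mul_le_mul_of_nonneg_left hnormAS (sq_nonneg τ)
          linarith
      _ = τ^2/2 * c * ‖H1 * H2 - H2 * H1‖ := by ring
end
end
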